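/- In the multi-agent CARA setting, fix n ≥ 2 and an agent index i, let b_i, η_i, σ_i, α_i, ξ_i ∈ ℝ with η_i² + σ_i² > 0, λ_i ≥ 0, λ_j ≥ 0 (j ≠ i), λ₀ ≥ 0, fixed controls u_j ∈ ℝ for j ≠ i, parameters ϱ_i > 0 and ϖ_i ∈ ℝ with ϖ_i ≠ n, and define χ := (1 − ϖ_i/n)/ϱ_i (so χ ≠ 0), ρ := ϖ_i/ϱ_i, the aggregates û·b, û·σ, û·ξ, the generator 𝓛^u and the function Θ exactly as follows: û·b := (1/n)Σ_{j≠i}u_j b_j, û·σ := (1/n)Σ_{j≠i}u_j σ_j, û·ξ := (1/n)Σ_{j≠i}u_j ξ_j; (𝓛^u φ)(x,y) := u b_i φ_x + û·b φ_y + (1/2)(η_i² + σ_i²)u² φ_{xx} + (1/2)((û·σ)² + (1/n²)Σ_{j≠i}u_j²η_j²) φ_{yy} + u σ_i (û·σ) φ_{xy} + λ_i(φ(x + uα_i, y) − φ(x, y) − uα_i φ_x) + Σ_{j≠i} λ_j(φ(x, y + u_jα_j/n) − φ(x, y) − (u_jα_j/n) φ_y) + λ₀(φ(x + uξ_i, y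 + û·ξ) − φ(x, y) − uξ_i φ_x − û·ξ φ_y); Θ(u) := −χ b_i u + ρ û·b + (1/2)χ²(η_i² + σ_i²)u² + (1/2)ρ²((û·σ)² + (1/n²)Σ_{j≠i}u_j²η_j²) − χρσ_i(û·σ)u + λ_i(e^{−χα_i u} − 1 + χα_i u) + Σ_{j≠i} λ_j(e^{ρ u_jα_j/n} − 1 − ρ u_jα_j/n) + λ₀(e^{−χξ_i u + ρ û·ξ} − 1 + χξ_i u − ρ û·ξ). Then Θ is strictly convex on ℝ, and if u* ∈ ℝ satisfies Θ'(u*) = 0 and β > Λ* := Θ(u*) for some β > 0, then the function V(x, y) := −(β − Λ*)⁻¹ exp(−(χx − ρy)) satisfies, for every (x, y) ∈ ℝ², β V(x, y) = sup_{u ∈ ℝ} { (𝓛^u V)(x, y) + f_i(x, y) }, where f_i(x, y) := −exp(−(1/ϱ_i)((1 − ϖ_i/n)x − ϖ_i y)), and the supremum is attained uniquely at u = u*. -/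

import Mathlib

/-- The generator of the pair `(X^i, Y^i)` in the multi-agent CARA portfolio game,
with partial derivatives written via `deriv`: `uu` is agent `i`'s control, `u j` the
fixed controls of the other agents, and the jump parts use the idiosyncratic sizes
`α` (intensities `lam`) and common size `ξ` (intensity `lam₀`). -/
noncomputable def caraGen (n : ℕ) (i : Fin n)
    (b η σv α ξ lam u : Fin n → ℝ) (lam₀ : ℝ)
    (uu : ℝ) (φ : ℝ → ℝ → ℝ) (x y : ℝ) : ℝ :=
  let ub := (1 / (n : ℝ)) * ∑ j ∈ Finset.univ.erase i, u j * b j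
  let usig := (1 / (n : ℝ)) * ∑ j ∈ Finset.univ.erase i, u j * σv j
  let uxi := (1 / (n : ℝ)) * ∑ j ∈ Finset.univ.erase i, u j * ξ j
  let φx := deriv (fun x' => φ x' y) x
  let φy := deriv (fun y' => φ x y') y
  let φxx := deriv (fun x' => deriv (fun x'' => φ x'' y) x') x
  let φyy := deriv (fun y' => deriv (fun y'' => φ x y'') y') y
  let φxy := deriv (fun y' => deriv (fun x' => φ x' y') x) y
  uu * b i * φx + ub * φy
    + (1 / 2) * (η i ^ 2 + σv i ^ 2) * uu ^ 2 * φxx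
    + (1 / 2) * (usig ^ 2
        + (1 / (n : ℝ) ^ 2) * ∑ j ∈ Finset.univ.erase i, u j ^ 2 * η j ^ 2) * φyy
    + uu * σv i * usig * φxy
    + lam i * (φ (x + uu * α i) y - φ x y - uu * α i * φx)
    + (∑ j ∈ Finset.univ.erase i, lam j *
        (φ x (y + u j * α j / (n : ℝ)) - φ x y - (u j * α j / (n : ℝ)) * φy))
    + lam₀ * (φ (x + uu * ξ i) (y + uxi) - φ x y - uu * ξ i * φx - uxi * φy)

/-- The state-independent exponent function `Θ` of agent `i` in the multi-agent CARA
portfolio game. -/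
noncomputable def caraTheta (n : ℕ) (i : Fin n)
    (b η σv α ξ lam u : Fin n → ℝ) (lam₀ χ ρ : ℝ) (uu : ℝ) : ℝ :=
  let ub := (1 / (n : ℝ)) * ∑ j ∈ Finset.univ.erase i, u j * b j
  let usig := (1 / (n : ℝ)) * ∑ j ∈ Finset.univ.erase i, u j * σv j
  let uxi := ((1 / (n : ℝ)) * ∑ j ∈ Finset.univ.erase i, u j * ξ j)
  (-χ * b i * uu) + ρ * ub
    + (1 / 2) * χ ^ 2 * (η i ^ 2 + σv i ^ 2) * uu ^ 2
    + (1 / 2) * ρ ^ 2 * (usig ^ 2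
        + (1 / (n : ℝ) ^ 2) * ∑ j ∈ Finset.univ.erase i, u j ^ 2 * η j ^ 2)
    - χ * ρ * σv i * usig * uu
    + lam i * (Real.exp (-(χ * α i * uu)) - 1 + χ * α i * uu)
    + (∑ j ∈ Finset.univ.erase i, lam j *
        (Real.exp (ρ * u j * α j / (n : ℝ)) - 1 - ρ * u j * α j / (n : ℝ)))
    + lam₀ * (Real.exp (-(χ * ξ i * uu) + ρ * uxi) - 1 + χ * ξ i * uu - ρ * uxi)

private lemma cara_expAff (k a bb t : ℝ) :
    HasDerivAt (fun s => k * Real.exp (a * s + bb)) (k * a * Real.exp (a * t + bb)) t := by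
  have h : HasDerivAt (fun s : ℝ => a * s + bb) a t := by
    simpa using ((hasDerivAt_id t).const_mul a).add_const bb
  have h2 := (h.exp).const_mul k
  rw [show k * a * Real.exp (a * t + bb) = k * (Real.exp (a * t + bb) * a) by ring]
  exact h2

private lemma cara_strictconv_aux (C2 C1 C0 l1 l2 a1 a2 a3 : ℝ)
    (hC2 : 0 < C2) (hl1 : 0 ≤ l1) (hl2 : 0 ≤ l2) :
    StrictConvexOn ℝ Set.univ (fun uu : ℝ =>
      C2 * uu ^ 2 + C1 * uu + C0 + l1 * Real.exp (a1 * uu) + l2 * Real.exp (a2 * uu + a3)) := by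
  refine ⟨convex_univ, ?_⟩
  intro x _ y _ hxy a bc ha hb hab
  obtain rfl : bc = 1 - a := by linarith
  simp only [smul_eq_mul]
  have hne : x - y ≠ 0 := sub_ne_zero.2 hxy
  have h0 : 0 < (x - y) ^ 2 := lt_of_le_of_ne (sq_nonneg _) (Ne.symm (pow_ne_zero 2 hne))
  have ha1 : 0 < 1 - a := hb
  have hq : C2 * (a * x + (1 - a) * y) ^ 2 < a * (C2 * x ^ 2) + (1 - a) * (C2 * y ^ 2) := by
    nlinarith [mul_pos (mul_pos ha ha1) h0]
  have he1 : Real.exp (a1 * (a * x + (1 - a) * y)) ≤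
      a * Real.exp (a1 * x) + (1 - a) * Real.exp (a1 * y) := by
    have h := convexOn_exp.2 (Set.mem_univ (a1 * x)) (Set.mem_univ (a1 * y)) ha.le hb.le hab
    simp only [smul_eq_mul] at h
    rw [show a * (a1 * x) + (1 - a) * (a1 * y) = a1 * (a * x + (1 - a) * y) from by ring] at h
    exact h
  have he2 : Real.exp (a2 * (a * x + (1 - a) * y) + a3) ≤
      a * Real.exp (a2 * x + a3) + (1 - a) * Real.exp (a2 * y + a3) := by
    have h := convexOn_exp.2 (Set.mem_univ (a2 * x + a3)) (Set.mem_univ (a2 * y + a3))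
      ha.le hb.le hab
    simp only [smul_eq_mul] at h
    rw [show a * (a2 * x + a3) + (1 - a) * (a2 * y + a3)
        = a2 * (a * x + (1 - a) * y) + a3 from by ring] at h
    exact h
  have h1 := mul_le_mul_of_nonneg_left he1 hl1
  have h2 := mul_le_mul_of_nonneg_left he2 hl2
  nlinarith [hq, h1, h2]

/-- Closed-form best-response value function of agent `i` in the infinite-horizon
discounted multi-agent CARA portfolio game: `Θ` is strictly convex, and if `u*` is a
critical point of `Θ` with `β > Λ* = Θ(u*)`, then
`V(x,y) = −(β − Λ*)⁻¹ exp(−(χx − ρy))` solves the stationary HJB equation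
`βV = sup_u {𝓛^u V + fᵢ}`, the supremum being attained uniquely at `u*`. -/
theorem cara_hjb_verification
    (n : ℕ) (hn : 2 ≤ n) (i : Fin n)
    (b η σv α ξ lam u : Fin n → ℝ) (lam₀ : ℝ)
    (hlam : ∀ j, 0 ≤ lam j) (hlam₀ : 0 ≤ lam₀)
    (hdiff : 0 < η i ^ 2 + σv i ^ 2)
    (ϱ ϖ : ℝ) (hϱ : 0 < ϱ) (hϖ : ϖ ≠ (n : ℝ))
    (χ ρ : ℝ) (hχ : χ = (1 - ϖ / (n : ℝ)) / ϱ) (hρ : ρ = ϖ / ϱ)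
    (β : ℝ) (hβpos : 0 < β)
    (ustar : ℝ)
    (hcrit : deriv (caraTheta n i b η σv α ξ lam u lam₀ χ ρ) ustar = 0)
    (hβ : caraTheta n i b η σv α ξ lam u lam₀ χ ρ ustar < β)
    (V : ℝ → ℝ → ℝ)
    (hV : V = fun x y =>
        -(β - caraTheta n i b η σv α ξ lam u lam₀ χ ρ ustar)⁻¹
          * Real.exp (-(χ * x - ρ * y)))
    (f : ℝ → ℝ → ℝ)
    (hf : f = fun x y => -Real.exp (-(1 / ϱ) * ((1 - ϖ / (n : ℝ)) * x - ϖ * y))) :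
    StrictConvexOn ℝ Set.univ (caraTheta n i b η σv α ξ lam u lam₀ χ ρ) ∧
    ∀ x y : ℝ,
      (β * V x y = caraGen n i b η σv α ξ lam u lam₀ ustar V x y + f x y) ∧
      (∀ uu : ℝ, uu ≠ ustar →
        caraGen n i b η σv α ξ lam u lam₀ uu V x y + f x y
          < caraGen n i b η σv α ξ lam u lam₀ ustar V x y + f x y) := by
  have hn0 : (n : ℝ) ≠ 0 := by
    have : (0 : ℝ) < (n : ℝ) := by exact_mod_cast Nat.lt_of_lt_of_le (by norm_num) hn
    exact this.ne'
  have hχne : χ ≠ 0 := by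
    rw [hχ]
    intro h
    rcases div_eq_zero_iff.1 h with h1 | h2
    · apply hϖ
      have h3 : ϖ / (n : ℝ) = 1 := by linarith
      field_simp at h3
      exact h3
    · exact hϱ.ne' h2
  have hχ2 : 0 < χ ^ 2 := lt_of_le_of_ne (sq_nonneg χ) (Ne.symm (pow_ne_zero 2 hχne))
  have hC2 : 0 < (1/2) * χ ^ 2 * (η i ^ 2 + σv i ^ 2) :=
    mul_pos (mul_pos (by norm_num) hχ2) hdiff
  -- canonical representation of Θ
  have hrep : caraTheta n i b η σv α ξ lam u lam₀ χ ρ = fun uu =>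
      ((1/2) * χ^2 * (η i ^ 2 + σv i ^ 2)) * uu ^ 2
      + (-(χ * b i) - χ * ρ * σv i * ((1/(n:ℝ)) * ∑ j ∈ Finset.univ.erase i, u j * σv j)
          + lam i * (χ * α i) + lam₀ * (χ * ξ i)) * uu
      + (ρ * ((1/(n:ℝ)) * ∑ j ∈ Finset.univ.erase i, u j * b j)
         + (1/2) * ρ^2 * (((1/(n:ℝ)) * ∑ j ∈ Finset.univ.erase i, u j * σv j)^2
             + (1/(n:ℝ)^2) * ∑ j ∈ Finset.univ.erase i, u j ^ 2 * η j ^ 2)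
         - lam i
         + (∑ j ∈ Finset.univ.erase i, lam j *
             (-1 + Real.exp (ρ * u j * α j / (n:ℝ)) - ρ * u j * α j / (n:ℝ)))
         + lam₀ * (-1 - ρ * ((1/(n:ℝ)) * ∑ j ∈ Finset.univ.erase i, u j * ξ j)))
      + lam i * Real.exp ((-(χ * α i)) * uu)
      + lam₀ * Real.exp ((-(χ * ξ i)) * uu
          + ρ * ((1/(n:ℝ)) * ∑ j ∈ Finset.univ.erase i, u j * ξ j)) := by
    funext uu
    simp only [caraTheta]
    ring_nf
  have hconv : StrictConvexOn ℝ Set.univ (caraTheta n i b η σv α ξ lam u lam₀ χ ρ) := by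
    rw [hrep]
    exact cara_strictconv_aux _ _ _ _ _ _ _ _ hC2 (hlam i) hlam₀
  have hdiffΘ : Differentiable ℝ (caraTheta n i b η σv α ξ lam u lam₀ χ ρ) := by
    rw [hrep]
    fun_prop
  -- ustar is the unique strict global minimizer
  have hmin : ∀ uu : ℝ, uu ≠ ustar →
      caraTheta n i b η σv α ξ lam u lam₀ χ ρ ustar
        < caraTheta n i b η σv α ξ lam u lam₀ χ ρ uu := by
    intro uu hne
    rcases hne.lt_or_gt with h | h
    · have hs := hconv.slope_lt_deriv (Set.mem_univ uu) (Set.mem_univ ustar) h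
        (hdiffΘ ustar)
      rw [hcrit, slope_def_field] at hs
      have hd : 0 < ustar - uu := by linarith
      by_contra hcon
      push_neg at hcon
      have : 0 ≤ (caraTheta n i b η σv α ξ lam u lam₀ χ ρ ustar
          - caraTheta n i b η σv α ξ lam u lam₀ χ ρ uu) / (ustar - uu) :=
        div_nonneg (by linarith) hd.le
      linarith
    · have hs := hconv.deriv_lt_slope (Set.mem_univ ustar) (Set.mem_univ uu) h
        (hdiffΘ ustar)
      rw [hcrit, slope_def_field] at hs
      have hd : 0 < uu - ustar := by linarith
      by_contra hcon
      push_neg at hcon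
      have : (caraTheta n i b η σv α ξ lam u lam₀ χ ρ uu
          - caraTheta n i b η σv α ξ lam u lam₀ χ ρ ustar) / (uu - ustar) ≤ 0 :=
        div_nonpos_of_nonpos_of_nonneg (by linarith) hd.le
      linarith
  have hcpos : 0 < β - caraTheta n i b η σv α ξ lam u lam₀ χ ρ ustar := by linarith
  -- derivative facts for V
  have hfx : ∀ y : ℝ, (fun x' => V x' y)
      = fun s => (-(β - caraTheta n i b η σv α ξ lam u lam₀ χ ρ ustar)⁻¹)
          * Real.exp ((-χ) * s + ρ * y) := by
    intro y; funext s; rw [hV]; ring_nf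
  have hfy : ∀ x : ℝ, (fun y' => V x y')
      = fun s => (-(β - caraTheta n i b η σv α ξ lam u lam₀ χ ρ ustar)⁻¹)
          * Real.exp (ρ * s + (-χ) * x) := by
    intro x; funext s; rw [hV]; ring_nf
  have hdx : ∀ x y : ℝ, deriv (fun x' => V x' y) x = -(χ * V x y) := by
    intro x y
    rw [hfx y, (cara_expAff _ (-χ) (ρ * y) x).deriv, hV]
    ring_nf
  have hdy : ∀ x y : ℝ, deriv (fun y' => V x y') y = ρ * V x y := by
    intro x y
    rw [hfy x, (cara_expAff _ ρ ((-χ) * x) y).deriv, hV]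
    ring_nf
  have hdxx : ∀ x y : ℝ,
      deriv (fun x' => deriv (fun x'' => V x'' y) x') x = χ ^ 2 * V x y := by
    intro x y
    have h1 : (fun x' => deriv (fun x'' => V x'' y) x')
        = fun s => (χ * (β - caraTheta n i b η σv α ξ lam u lam₀ χ ρ ustar)⁻¹)
            * Real.exp ((-χ) * s + ρ * y) := by
      funext s; rw [hdx s y, hV]; ring_nf
    rw [h1, (cara_expAff _ (-χ) (ρ * y) x).deriv, hV]
    ring_nf
  have hdyy : ∀ x y : ℝ,
      deriv (fun y' => deriv (fun y'' => V x y'') y') y = ρ ^ 2 * V x y := by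
    intro x y
    have h1 : (fun y' => deriv (fun y'' => V x y'') y')
        = fun s => (-(ρ * (β - caraTheta n i b η σv α ξ lam u lam₀ χ ρ ustar)⁻¹))
            * Real.exp (ρ * s + (-χ) * x) := by
      funext s; rw [hdy x s, hV]; ring_nf
    rw [h1, (cara_expAff _ ρ ((-χ) * x) y).deriv, hV]
    ring_nf
  have hdxy : ∀ x y : ℝ,
      deriv (fun y' => deriv (fun x' => V x' y') x) y = -(χ * ρ) * V x y := by
    intro x y
    have h1 : (fun y' => deriv (fun x' => V x' y') x)
        = fun s => (χ * (β - caraTheta n i b η σv α ξ lam u lam₀ χ ρ ustar)⁻¹)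
            * Real.exp (ρ * s + (-χ) * x) := by
      funext s; rw [hdx x s, hV]; ring_nf
    rw [h1, (cara_expAff _ ρ ((-χ) * x) y).deriv, hV]
    ring_nf
  -- jump shifts
  have hs1 : ∀ x y t : ℝ, V (x + t) y = V x y * Real.exp (-(χ * t)) := by
    intro x y t
    rw [hV]
    simp only
    rw [show (-(χ * (x + t) - ρ * y)) = (-(χ * x - ρ * y)) + (-(χ * t)) from by ring,
      Real.exp_add]
    ring
  have hs2 : ∀ x y t : ℝ, V x (y + t) = V x y * Real.exp (ρ * t) := by
    intro x y t
    rw [hV]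
    simp only
    rw [show (-(χ * x - ρ * (y + t))) = (-(χ * x - ρ * y)) + ρ * t from by ring, Real.exp_add]
    ring
  have hs3 : ∀ x y s t : ℝ, V (x + s) (y + t) = V x y * Real.exp (-(χ * s) + ρ * t) := by
    intro x y s t
    rw [hV]
    simp only
    rw [show (-(χ * (x + s) - ρ * (y + t))) = (-(χ * x - ρ * y)) + (-(χ * s) + ρ * t) from by
      ring, Real.exp_add]
    ring
  have hsum : ∀ x y : ℝ,
      (∑ j ∈ Finset.univ.erase i, lam j *
        (V x (y + u j * α j / (n : ℝ)) - V x y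
          - (u j * α j / (n : ℝ)) * deriv (fun y' => V x y') y))
      = V x y * ∑ j ∈ Finset.univ.erase i, lam j *
          (Real.exp (ρ * u j * α j / (n : ℝ)) - 1 - ρ * u j * α j / (n : ℝ)) := by
    intro x y
    rw [Finset.mul_sum]
    refine Finset.sum_congr rfl fun j _ => ?_
    rw [hs2, hdy]
    ring_nf
  -- the key generator identity
  have hGen : ∀ uu x y : ℝ, caraGen n i b η σv α ξ lam u lam₀ uu V x y
      = V x y * caraTheta n i b η σv α ξ lam u lam₀ χ ρ uu := by
    intro uu x y
    simp only [caraGen, caraTheta]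
    rw [hsum x y, hs1 x y (uu * α i),
      hs3 x y (uu * ξ i) ((1 / (n : ℝ)) * ∑ j ∈ Finset.univ.erase i, u j * ξ j),
      hdx x y, hdy x y, hdxx x y, hdyy x y, hdxy x y,
      show (∑ j ∈ Finset.univ.erase i, lam j *
          (Real.exp (ρ * u j * α j / (n : ℝ)) - 1 - ρ * u j * α j / (n : ℝ)))
        = (∑ j ∈ Finset.univ.erase i, lam j *
          (-1 + Real.exp (ρ * u j * α j / (n : ℝ)) - ρ * u j * α j / (n : ℝ)))
        from Finset.sum_congr rfl fun j _ => by ring]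
    ring_nf
  -- f in terms of V
  have hfV : ∀ x y : ℝ, f x y
      = (β - caraTheta n i b η σv α ξ lam u lam₀ χ ρ ustar) * V x y := by
    intro x y
    rw [hf, hV]
    simp only
    rw [show (-(1 / ϱ) * ((1 - ϖ / (n : ℝ)) * x - ϖ * y)) = (-(χ * x - ρ * y)) from by
      rw [hχ, hρ]; field_simp]
    rw [neg_mul, mul_neg, ← mul_assoc, mul_inv_cancel₀ hcpos.ne', one_mul]
  have hVneg : ∀ x y : ℝ, V x y < 0 := by
    intro x y
    rw [hV]
    simp only
    have h1 := Real.exp_pos (-(χ * x - ρ * y))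
    have h2 := inv_pos.2 hcpos
    nlinarith
  refine ⟨hconv, fun x y => ⟨?_, ?_⟩⟩
  · rw [hGen ustar x y, hfV x y]
    ring
  · intro uu hne
    rw [hGen uu x y, hGen ustar x y]
    have h := hmin uu hne
    have hVn := hVneg x y
    have := mul_lt_mul_of_neg_left h hVn
    linarith
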